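/- If R is a semicommutative ring, then R is weak Armendariz if and only if R is almost Armendariz. -/

import Mathlib

/-- An element `a` of a ring `R` is *strongly nilpotent* if every sequence
`a₀ = a`, `aₙ₊₁ ∈ aₙ R aₙ` is eventually zero. -/
def IsStronglyNilpotent {R : Type*} [Ring R] (a : R) : Prop :=
  ∀ s : ℕ → R, s 0 = a → (∀ n : ℕ, ∃ r : R, s (n + 1) = s n * r * s n) → ∃ n : ℕ, s n = 0

/-- The prime radical `P(R)` of a ring `R`: the intersection of all prime two-sided
ideals of `R`, equivalently the set of strongly nilpotent elements of `R`. -/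
def primeRadical (R : Type*) [Ring R] : Set R :=
  {a : R | IsStronglyNilpotent a}

/-- A ring `R` is *almost Armendariz* if whenever `f, g ∈ R[x]` satisfy `f g = 0`, every
product of a coefficient of `f` with a coefficient of `g` lies in the prime radical `P(R)`. -/
def IsAlmostArmendariz (R : Type*) [Ring R] : Prop :=
  ∀ f g : Polynomial R, f * g = 0 → ∀ i j : ℕ, f.coeff i * g.coeff j ∈ primeRadical R

/-- A ring `R` is *weak Armendariz* if whenever `f, g ∈ R[x]` satisfy `f g = 0`, every
product of a coefficient of `f` with a coefficient of `g` is nilpotent. -/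
def IsWeakArmendariz (R : Type*) [Ring R] : Prop :=
  ∀ f g : Polynomial R, f * g = 0 → ∀ i j : ℕ, IsNilpotent (f.coeff i * g.coeff j)

/-- Products of the form `a * c₁ * a * c₂ * ⋯ * cₖ₋₁ * a` containing `k` copies of `a`. -/
inductive LSpread {R : Type*} [Ring R] (a : R) : ℕ → R → Prop
  | base : LSpread a 1 a
  | step {k : ℕ} {x : R} (c : R) : LSpread a k x → LSpread a (k + 1) (x * c * a)

lemma LSpread.mul {R : Type*} [Ring R] {a : R} {k j : ℕ} {x y : R}
    (hx : LSpread a k x) (hy : LSpread a j y) (r : R) : LSpread a (k + j) (x * r * y) := by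
  induction hy with
  | base => exact hx.step r
  | step c hy ih =>
    rename_i k' y'
    have : x * r * (y' * c * a) = (x * r * y') * c * a := by noncomm_ring
    rw [this]
    exact ih.step c

lemma LSpread.mul_pow_eq_zero {R : Type*} [Ring R] {a : R} {n : ℕ} (ha : a ^ n = 0)
    (hsc : ∀ a b : R, a * b = 0 → ∀ r : R, a * r * b = 0)
    {k : ℕ} {x : R} (hx : LSpread a k x) : ∀ m : ℕ, n ≤ k + m → x * a ^ m = 0 := by
  induction hx with
  | base =>
    intro m hm
    have : a * a ^ m = a ^ n * a ^ (1 + m - n) := by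
      rw [← pow_succ', ← pow_add]
      congr 1
      omega
    rw [this, ha, zero_mul]
  | step c hx ih =>
    intro m hm
    rename_i k' x'
    have h1 : x' * a ^ (m + 1) = 0 := ih (m + 1) (by omega)
    -- from x' * a^(m+1) = 0, semicommutativity gives x' * c * a^(m+1) = 0
    have h4 : x' * c * a ^ (m + 1) = 0 := by
      have := hsc _ _ h1 c
      rwa [mul_assoc] at this ⊢
    calc x' * c * a * a ^ m = x' * c * a ^ (m + 1) := by
          rw [pow_succ', mul_assoc]
    _ = 0 := h4

lemma isStronglyNilpotent_of_isNilpotent {R : Type*} [Ring R]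
    (hsc : ∀ a b : R, a * b = 0 → ∀ r : R, a * r * b = 0)
    {a : R} (ha : IsNilpotent a) : IsStronglyNilpotent a := by
  obtain ⟨n, hn⟩ := ha
  intro s hs0 hstep
  rcases Nat.eq_zero_or_pos n with rfl | hnpos
  · -- `a ^ 0 = 1 = 0`, so the ring is trivial
    refine ⟨0, ?_⟩
    have h1 : (1 : R) = 0 := by simpa using hn
    calc s 0 = s 0 * 1 := (mul_one _).symm
    _ = s 0 * 0 := by rw [h1]
    _ = 0 := mul_zero _
  · have key : ∀ k, LSpread a (2 ^ k) (s k) := by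
      intro k
      induction k with
      | zero => simpa [hs0] using (LSpread.base : LSpread a 1 a)
      | succ k ih =>
        obtain ⟨r, hr⟩ := hstep k
        rw [hr]
        have := ih.mul ih r
        have h2 : 2 ^ k + 2 ^ k = 2 ^ (k + 1) := by ring
        rwa [h2] at this
    refine ⟨n, ?_⟩
    have h := (key n).mul_pow_eq_zero hn hsc 0 (by
      have := @Nat.lt_two_pow_self n
      omega)
    simpa using h

lemma isNilpotent_of_isStronglyNilpotent {R : Type*} [Ring R]
    {a : R} (ha : IsStronglyNilpotent a) : IsNilpotent a := by
  obtain ⟨n, hn⟩ := ha (fun k => a ^ (2 ^ k)) (by simp)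
    (fun k => ⟨1, by show a ^ 2 ^ (k + 1) = a ^ 2 ^ k * 1 * a ^ 2 ^ k; rw [mul_one, ← pow_add, Nat.two_pow_succ]⟩)
  exact ⟨2 ^ n, hn⟩

/-- If `R` is a semicommutative ring, then `R` is weak Armendariz if and only if `R` is
almost Armendariz. -/
theorem weakArmendariz_iff_almostArmendariz_of_semicommutative {R : Type*} [Ring R]
    (hsc : ∀ a b : R, a * b = 0 → ∀ r : R, a * r * b = 0) :
    IsWeakArmendariz R ↔ IsAlmostArmendariz R := by
  constructor
  · intro hw f g hfg i j
    exact isStronglyNilpotent_of_isNilpotent hsc (hw f g hfg i j)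
  · intro ha f g hfg i j
    exact isNilpotent_of_isStronglyNilpotent (ha f g hfg i j)
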